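/- The matrix B = D̄_s + H^σ is positive semidefinite: for every x ∈ ℂⁿ, x* B x ≥ 0. -/

import Mathlib

open Matrix Complex

/-- Symmetrized adjacency matrix `A_s = (A + Aᵀ)/2`. -/
noncomputable def symAdj {n : ℕ} (A : Matrix (Fin n) (Fin n) ℝ) :
    Matrix (Fin n) (Fin n) ℝ :=
  fun i j => (A i j + A j i) / 2

/-- The matrix `H^σ = A_s ⊙ (ee^⊤ − sgn(|A − Aᵀ|) + i·sgn(|A| − |Aᵀ|))`, entrywise. -/
noncomputable def Hsigma {n : ℕ} (A : Matrix (Fin n) (Fin n) ℝ) :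
    Matrix (Fin n) (Fin n) ℂ :=
  fun i j => (symAdj A i j : ℂ) *
    (((1 - Real.sign |A i j - A j i| : ℝ) : ℂ) +
      Complex.I * ((Real.sign (|A i j| - |A j i|) : ℝ) : ℂ))

/-- The degree matrix `D̄_s = Diag(|A_s| e)`. -/
noncomputable def DbarS {n : ℕ} (A : Matrix (Fin n) (Fin n) ℝ) :
    Matrix (Fin n) (Fin n) ℂ :=
  Matrix.diagonal (fun i => ((∑ j, |symAdj A i j| : ℝ) : ℂ))

/-- The Sign-Magnetic Laplacian `L^σ = D̄_s − H^σ`. -/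
noncomputable def Lsigma {n : ℕ} (A : Matrix (Fin n) (Fin n) ℝ) :
    Matrix (Fin n) (Fin n) ℂ :=
  DbarS A - Hsigma A

lemma symAdj_symm {n : ℕ} (A : Matrix (Fin n) (Fin n) ℝ) (i j : Fin n) :
    symAdj A j i = symAdj A i j := by unfold symAdj; ring

lemma Hsigma_star {n : ℕ} (A : Matrix (Fin n) (Fin n) ℝ) (i j : Fin n) :
    star (Hsigma A j i) = Hsigma A i j := by
  unfold Hsigma
  rw [symAdj_symm]
  have h1 : |A j i - A i j| = |A i j - A j i| := abs_sub_comm _ _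
  have h2 : Real.sign (|A j i| - |A i j|) = - Real.sign (|A i j| - |A j i|) := by
    rw [← Real.sign_neg]; ring_nf
  rw [h1, h2]
  simp [Complex.ext_iff]

lemma Hsigma_abs_le {n : ℕ} (A : Matrix (Fin n) (Fin n) ℝ) (i j : Fin n) :
    ‖Hsigma A i j‖ ≤ |symAdj A i j| := by
  unfold Hsigma
  rw [norm_mul, Complex.norm_real, Real.norm_eq_abs]
  have hc : ‖(((1 - Real.sign |A i j - A j i| : ℝ) : ℂ) +
      Complex.I * ((Real.sign (|A i j| - |A j i|) : ℝ) : ℂ))‖ ≤ 1 := by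
    by_cases h : A i j = A j i
    · simp [h, Real.sign_zero]
    · have ht : (0:ℝ) < |A i j - A j i| := abs_pos.mpr (sub_ne_zero.mpr h)
      rw [Real.sign_of_pos ht]
      simp only [sub_self, Complex.ofReal_zero, zero_add]
      rw [norm_mul, Complex.norm_I, one_mul, Complex.norm_real, Real.norm_eq_abs]
      rcases Real.sign_apply_eq (|A i j| - |A j i|) with h' | h' | h' <;> rw [h'] <;> norm_num
  calc |symAdj A i j| * ‖_‖ ≤ |symAdj A i j| * 1 :=
        mul_le_mul_of_nonneg_left hc (abs_nonneg _)
    _ = |symAdj A i j| := mul_one _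

open scoped ComplexOrder

lemma B_herm {n : ℕ} (A : Matrix (Fin n) (Fin n) ℝ) :
    (DbarS A + Hsigma A).IsHermitian := by
  ext i j
  simp only [conjTranspose_apply, Matrix.add_apply, star_add, Hsigma_star]
  congr 1
  unfold DbarS
  by_cases h : i = j
  · subst h; simp
  · simp [Matrix.diagonal_apply_ne _ h, Matrix.diagonal_apply_ne' _ h]

/-- the matrix `B = D̄_s + H^σ` is positive semidefinite:
for every `x ∈ ℂⁿ`, `x* B x ≥ 0`. -/
theorem DbarS_add_Hsigma_posSemidef {n : ℕ} (A : Matrix (Fin n) (Fin n) ℝ)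
    (hloop : ∀ i, A i i = 0) :
    (DbarS A + Hsigma A).PosSemidef := by
  rw [posSemidef_iff_dotProduct_mulVec]
  refine ⟨B_herm A, fun x => ?_⟩
  set B := DbarS A + Hsigma A with hBdef
  set z := star x ⬝ᵥ (B *ᵥ x) with hzdef
  rw [Complex.le_def]
  constructor
  · -- real part nonneg
    set a : Fin n → ℝ := fun i => ‖x i‖ with ha
    set S : Fin n → Fin n → ℝ := fun i j => |symAdj A i j| with hS
    have hSsymm : ∀ i j, S j i = S i j := fun i j => by rw [hS]; simp only []; rw [symAdj_symm]
    have hSnn : ∀ i j, 0 ≤ S i j := fun i j => abs_nonneg _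
    have hz : z = star x ⬝ᵥ (DbarS A *ᵥ x) + star x ⬝ᵥ (Hsigma A *ᵥ x) := by
      rw [hzdef, hBdef, add_mulVec, dotProduct_add]
    have hterm : ∀ (r : ℝ) (w : ℂ), (star w * ((r : ℂ) * w)).re = r * ‖w‖ ^ 2 := by
      intro r w
      rw [show star w * ((r : ℂ) * w) = (r : ℂ) * (w * star w) by ring]
      rw [Complex.star_def, Complex.mul_conj, ← Complex.ofReal_mul]
      rw [Complex.ofReal_re, Complex.normSq_eq_norm_sq]
    have hD : (star x ⬝ᵥ (DbarS A *ᵥ x)).re = ∑ i, ∑ j, S i j * a i ^ 2 := by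
      simp only [DbarS, dotProduct, mulVec_diagonal, Complex.re_sum, Pi.star_apply]
      refine Finset.sum_congr rfl fun i _ => ?_
      rw [hterm, Finset.sum_mul]
    have hH : (star x ⬝ᵥ (Hsigma A *ᵥ x)).re
        = ∑ i, ∑ j, (star (x i) * (Hsigma A i j * x j)).re := by
      simp only [dotProduct, mulVec, Complex.re_sum, Finset.mul_sum, Pi.star_apply]
    have hHbound : ∑ i, ∑ j, (-(S i j * (a i * a j)))
        ≤ ∑ i, ∑ j, (star (x i) * (Hsigma A i j * x j)).re := by
      refine Finset.sum_le_sum fun i _ => Finset.sum_le_sum fun j _ => ?_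
      have habs : ‖star (x i) * (Hsigma A i j * x j)‖ ≤ S i j * (a i * a j) := by
        rw [norm_mul, norm_mul, Complex.star_def, Complex.norm_conj]
        calc ‖x i‖ * (‖Hsigma A i j‖ * ‖x j‖)
            ≤ ‖x i‖ * (S i j * ‖x j‖) := by
              apply mul_le_mul_of_nonneg_left _ (norm_nonneg _)
              exact mul_le_mul_of_nonneg_right (Hsigma_abs_le A i j) (norm_nonneg _)
          _ = S i j * (a i * a j) := by rw [ha]; ring
      have h1 : -‖star (x i) * (Hsigma A i j * x j)‖
          ≤ (star (x i) * (Hsigma A i j * x j)).re := by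
        have := Complex.abs_re_le_norm (star (x i) * (Hsigma A i j * x j))
        cases abs_le.mp this with
        | intro h _ => exact h
      linarith
    have hsym : ∑ i, ∑ j, S i j * a j ^ 2 = ∑ i, ∑ j, S i j * a i ^ 2 := by
      rw [Finset.sum_comm]
      exact Finset.sum_congr rfl fun i _ => Finset.sum_congr rfl fun j _ => by rw [hSsymm]
    have hkey : ∑ i, ∑ j, S i j * (a i * a j) ≤ ∑ i, ∑ j, S i j * a i ^ 2 := by
      have h2 : ∑ i, ∑ j, (2 * (S i j * (a i * a j)))
          ≤ ∑ i, ∑ j, (S i j * a i ^ 2 + S i j * a j ^ 2) := by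
        refine Finset.sum_le_sum fun i _ => Finset.sum_le_sum fun j _ => ?_
        nlinarith [hSnn i j, sq_nonneg (a i - a j)]
      have e1 : ∑ i, ∑ j, (2 * (S i j * (a i * a j)))
          = 2 * ∑ i, ∑ j, S i j * (a i * a j) := by
        rw [Finset.mul_sum]; exact Finset.sum_congr rfl fun i _ => (Finset.mul_sum _ _ _).symm
      have e2 : ∑ i, ∑ j, (S i j * a i ^ 2 + S i j * a j ^ 2)
          = (∑ i, ∑ j, S i j * a i ^ 2) + ∑ i, ∑ j, S i j * a j ^ 2 := by
        rw [← Finset.sum_add_distrib]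
        exact Finset.sum_congr rfl fun i _ => Finset.sum_add_distrib
      rw [e1, e2, hsym] at h2
      linarith
    have : z.re = (star x ⬝ᵥ (DbarS A *ᵥ x)).re + (star x ⬝ᵥ (Hsigma A *ᵥ x)).re := by
      rw [hz, Complex.add_re]
    rw [this, hD, hH]
    simp only [Complex.zero_re]
    have := hHbound
    have hneg : ∑ i, ∑ j, (-(S i j * (a i * a j))) = -∑ i, ∑ j, S i j * (a i * a j) := by
      simp [Finset.sum_neg_distrib]
    rw [hneg] at this
    linarith
  · -- imaginary part
    have hstar : star z = z := by
      rw [hzdef, ← star_dotProduct, star_mulVec, ← dotProduct_mulVec, (B_herm A).eq]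
    rw [Complex.zero_im]
    exact (Complex.conj_eq_iff_im.mp hstar).symm
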